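/- arXiv:2602.13492 — 2 statements merged into one kernel-verified Lean document; each statement's English description precedes it below -/
import Mathlib

section
/- Two-column t-interpolation Schur polynomial identity: Let a ≥ 1 and b ≥ 0 with a + b ≤ n, and let λ = (2^a, 1^b). Then s*_λ(t·x₁,…,t·xₙ;t) = t^a · e*_{a+b}(t·x₁,…,t·xₙ;t) · e*_a(x₁,…,xₙ;t) − t^{a+b+1} · e*_{a+b+1}(x₁,…,xₙ;t) · e*_{a−1}(t·x₁,…,t·xₙ;t), where f(t·x₁,…,t·xₙ) denotes the polynomial f with each variable xᵢ replaced by t·xᵢ, and e*_m := 0 for m > n. -/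
open MvPolynomial

noncomputable section

/-- `k = ℚ(t)`, the field of rational functions in `t` over `ℚ`. -/
abbrev kk : Type := RatFunc ℚ

/-- `K = k(q)`, the field of rational functions in `q` over `k`. -/
abbrev KK : Type := RatFunc kk

/-- The element `t` of `k`. -/
def tk : kk := RatFunc.X

/-- The element `t` of `K`. -/
def tK : KK := RatFunc.C tk

/-- The element `q` of `K`. -/
def qK : KK := RatFunc.X

/-- `kᵢ(μ) = #{j < i : μⱼ > μᵢ} + #{j > i : μⱼ ≥ μᵢ}`. -/
def kStat {n : ℕ} (μ : Fin n → ℕ) (i : Fin n) : ℕ :=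
  (Finset.univ.filter (fun j => j < i ∧ μ i < μ j)).card +
    (Finset.univ.filter (fun j => i < j ∧ μ i ≤ μ j)).card

/-- `μ̄ = (q^{μ₁} t^{−k₁(μ)}, …, q^{μₙ} t^{−kₙ(μ)}) ∈ Kⁿ`. -/
def mubar {n : ℕ} (μ : Fin n → ℕ) : Fin n → KK :=
  fun i => qK ^ (μ i) * tK ^ (-(kStat μ i : ℤ))

/-- `|μ| = μ₁ + ⋯ + μₙ`. -/
def wt {n : ℕ} (μ : Fin n → ℕ) : ℕ := ∑ i, μ i

/-- A partition: a weakly decreasing composition. -/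
def IsPartition {n : ℕ} (μ : Fin n → ℕ) : Prop := ∀ i j : Fin n, i ≤ j → μ j ≤ μ i

/-- The exponent vector of the monomial `x^μ`. -/
def toMono {n : ℕ} (μ : Fin n → ℕ) : Fin n →₀ ℕ := Finsupp.equivFunOnFinite.symm μ

/-- `Sₙ(λ)`: the set of compositions obtained by permuting the entries of `λ`. -/
def permSet {n : ℕ} (lam : Fin n → ℕ) : Finset (Fin n → ℕ) :=
  Finset.image (fun σ : Equiv.Perm (Fin n) => lam ∘ σ) Finset.univ

/-- The defining conditions of the interpolation Macdonald polynomial `P*_λ`. -/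
def IsIntMacdonald {n : ℕ} (lam : Fin n → ℕ) (P : MvPolynomial (Fin n) KK) : Prop :=
  P.IsSymmetric ∧ P.totalDegree ≤ wt lam ∧ P.coeff (toMono lam) = 1 ∧
    ∀ ν : Fin n → ℕ, IsPartition ν → ν ≠ lam → wt ν ≤ wt lam →
      MvPolynomial.eval (mubar ν) P = 0

/-- The defining conditions of the interpolation ASEP polynomial `F*_μ`,
with respect to the partition `λ` (the decreasing rearrangement of `μ`). -/
def IsIntASEP {n : ℕ} (lam μ : Fin n → ℕ) (F : MvPolynomial (Fin n) KK) : Prop :=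
  F.totalDegree ≤ wt lam ∧
    (∀ τ ∈ permSet lam, F.coeff (toMono τ) = if τ = μ then 1 else 0) ∧
    ∀ ν : Fin n → ℕ, wt ν ≤ wt lam → ν ∉ permSet lam →
      MvPolynomial.eval (mubar ν) F = 0

/-- The defining conditions of the nonsymmetric interpolation Macdonald polynomial `E*_μ`. -/
def IsIntE {n : ℕ} (μ : Fin n → ℕ) (E : MvPolynomial (Fin n) KK) : Prop :=
  E.totalDegree ≤ wt μ ∧ E.coeff (toMono μ) = 1 ∧
    ∀ ν : Fin n → ℕ, ν ≠ μ → wt ν ≤ wt μ → MvPolynomial.eval (mubar ν) E = 0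

/-- Evaluation of a rational function in `q` at `q = 1` (junk value if not regular there). -/
def atOne (c : KK) : kk := RatFunc.eval (RingHom.id kk) 1 c

/-- `P` is regular at `q = 1`: the reduced denominator of each coefficient does not
vanish at `q = 1`. -/
def RegAtOne {n : ℕ} (P : MvPolynomial (Fin n) KK) : Prop :=
  ∀ m : Fin n →₀ ℕ, Polynomial.eval (1 : kk) (P.coeff m).denom ≠ 0

/-- Coefficient-wise evaluation of `P` at `q = 1`. -/
def evalq1 {n : ℕ} (P : MvPolynomial (Fin n) KK) : MvPolynomial (Fin n) kk :=
  ∑ m ∈ P.support, monomial m (atOne (P.coeff m))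

/-- The interpolation elementary polynomial `e*_{m,ℓ}(x₁,…,xₙ;t)`, with coefficients in `k`. -/
def estar (n m : ℕ) (ℓ : ℤ) : MvPolynomial (Fin n) kk :=
  ∑ S ∈ Finset.powersetCard m (Finset.univ : Finset (Fin n)),
    ∏ i ∈ S, (X i - C (tk ^ (((Sᶜ.filter (fun j => j < i)).card : ℤ) - ℓ)))

/-- The interpolation elementary polynomial `e*_{m,ℓ}(x₁,…,xₙ;t)`, with coefficients in `K`. -/
def estarK (n m : ℕ) (ℓ : ℤ) : MvPolynomial (Fin n) KK :=
  ∑ S ∈ Finset.powersetCard m (Finset.univ : Finset (Fin n)),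
    ∏ i ∈ S, (X i - C (tK ^ (((Sᶜ.filter (fun j => j < i)).card : ℤ) - ℓ)))

/-- The conjugate partition: `λ′ᵢ = #{j : λⱼ ≥ i}`. -/
def conjP {n : ℕ} (lam : Fin n → ℕ) (i : ℕ) : ℕ :=
  (Finset.univ.filter (fun j => i ≤ lam j)).card

/-- A filling `T` of the Young diagram of `λ` (row `i` has cells `j : Fin (λ i)`) with
values in `{1,…,n}` (encoded as `Fin n`, with `T i j : Fin n` encoding the value
`(T i j : ℕ) + 1`) is a semistandard Young tableau: rows weakly increase and columns
strictly increase. -/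
def IsSSYT {n : ℕ} (lam : Fin n → ℕ) (T : (i : Fin n) → Fin (lam i) → Fin n) : Prop :=
  (∀ (i : Fin n) (j j' : Fin (lam i)), j ≤ j' → T i j ≤ T i j') ∧
    (∀ (i i' : Fin n) (j : Fin (lam i)) (j' : Fin (lam i')),
      i < i' → (j : ℕ) = (j' : ℕ) → T i j < T i' j')

/-- The `t`-interpolation Schur polynomial
`s*_λ(x₁,…,xₙ;t) = Σ_{T ∈ SSYT(λ;n)} ∏_{□ ∈ λ} (x_{T(□)} − t^{c(□) + T(□) − n})`,
where `c(□) = j − i` is the content of the cell `□ = (i, j)`. -/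
def sstar (n : ℕ) (lam : Fin n → ℕ) : MvPolynomial (Fin n) kk :=
  letI := Classical.decPred (fun T : (i : Fin n) → Fin (lam i) → Fin n => IsSSYT lam T)
  ∑ T ∈ Finset.univ.filter (fun T : (i : Fin n) → Fin (lam i) → Fin n => IsSSYT lam T),
    ∏ i : Fin n, ∏ j : Fin (lam i),
      (X (T i j) - C (tk ^ (((j : ℤ) - (i : ℤ)) + ((T i j : ℤ) + 1) - (n : ℤ))))

namespace TwoColumn
open Finset
variable {n : ℕ}

lemma tk_ne_zero : tk ≠ 0 := RatFunc.X_ne_zero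

def cntLe (S : Finset (Fin n)) (v : Fin n) : ℕ := (S.filter (fun u => u ≤ v)).card
def cnt (S : Finset (Fin n)) (v : Fin n) : ℕ := (S.filter (fun u => u < v)).card

def Fp (n : ℕ) (ℓ : ℤ) (S : Finset (Fin n)) : MvPolynomial (Fin n) kk :=
  ∏ i ∈ S, (X i - C (tk ^ (((Sᶜ.filter (fun j => j < i)).card : ℤ) - ℓ)))

lemma estar_eq (n m : ℕ) (ℓ : ℤ) :
    estar n m ℓ = ∑ S ∈ Finset.powersetCard m Finset.univ, Fp n ℓ S := rfl

lemma cnt_add_compl (S : Finset (Fin n)) (v : Fin n) :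
    cnt S v + ((Sᶜ.filter (fun j => j < v)).card) = (v : ℕ) := by
  rw [cnt, ← card_union_of_disjoint (disjoint_filter_filter disjoint_compl_right),
    ← filter_union, union_compl]
  rw [show (univ.filter (fun u : Fin n => u < v)) = Finset.Iio v from by ext u; simp, Fin.card_Iio]

lemma compl_card_eq {S S' : Finset (Fin n)} {v : Fin n} (h : cnt S v = cnt S' v) :
    ((Sᶜ.filter (fun j => j < v)).card) = ((S'ᶜ.filter (fun j => j < v)).card) := by
  have h1 := cnt_add_compl S v
  have h2 := cnt_add_compl S' v
  omega

lemma cntLe_eq_cnt (S : Finset (Fin n)) (v : Fin n) :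
    cntLe S v = cnt S v + (if v ∈ S then 1 else 0) := by
  rw [cntLe, cnt, show S.filter (fun u => u ≤ v) = S.filter (fun u => u < v) ∪ S.filter (fun u => u = v) from by
    ext u; simp only [mem_union, mem_filter]; constructor
    · rintro ⟨hu, hle⟩
      rcases lt_or_eq_of_le hle with h | h
      · exact Or.inl ⟨hu, h⟩
      · exact Or.inr ⟨hu, h⟩
    · rintro (⟨hu, hlt⟩ | ⟨hu, rfl⟩)
      · exact ⟨hu, le_of_lt hlt⟩
      · exact ⟨hu, le_refl _⟩]
  rw [card_union_of_disjoint (disjoint_left.2 fun u h1 h2 =>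
    absurd (mem_filter.1 h2).2 (ne_of_lt (mem_filter.1 h1).2))]
  congr 1
  rw [filter_eq']
  split <;> simp


section Swap

/-- the sets after swapping the parts below/at θ -/
def Rset (P Q : Finset (Fin n)) (θ : Fin n) : Finset (Fin n) :=
  Q.filter (fun u => u ≤ θ) ∪ P.filter (fun u => θ < u)

lemma disj_filter (A B : Finset (Fin n)) (θ : Fin n) :
    Disjoint (A.filter (fun u => u ≤ θ)) (B.filter (fun u => θ < u)) :=
  disjoint_left.2 fun u h1 h2 => absurd (mem_filter.1 h2).2 (not_lt.2 (mem_filter.1 h1).2)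

lemma cntLe_R_le (P Q : Finset (Fin n)) (θ v : Fin n) (hv : v ≤ θ) :
    cntLe (Rset P Q θ) v = cntLe Q v := by
  unfold cntLe Rset
  congr 1
  ext u
  have h1 : u ≤ v → u ≤ θ := fun h => le_trans h hv
  have h2 : θ < u → ¬ u ≤ v := fun h hc => absurd (le_trans hc hv) (not_le.2 h)
  simp only [mem_filter, mem_union, filter_union, filter_filter]
  tauto

lemma cnt_R_le (P Q : Finset (Fin n)) (θ v : Fin n) (hv : v ≤ θ) :
    cnt (Rset P Q θ) v = cnt Q v := by
  unfold cnt Rset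
  congr 1
  ext u
  have h1 : u < v → u ≤ θ := fun h => le_trans (le_of_lt h) hv
  have h2 : θ < u → ¬ u < v := fun h hc => absurd (le_trans (le_of_lt hc) hv) (not_le.2 h)
  simp only [mem_filter, mem_union, filter_union, filter_filter]
  tauto

lemma cnt_R_gt (P Q : Finset (Fin n)) (θ v : Fin n) (hv : θ < v) :
    cnt (Rset P Q θ) v = cntLe Q θ + (P.filter (fun u => θ < u ∧ u < v)).card := by
  unfold cnt Rset cntLe
  rw [filter_union]
  rw [card_union_of_disjoint (disjoint_left.2 fun u h1 h2 => by
    have g1 := (mem_filter.1 (mem_of_mem_filter u h1)).2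
    have g2 := (mem_filter.1 (mem_of_mem_filter u h2)).2
    exact absurd g2 (not_lt.2 g1))]
  have e1 : ((Q.filter (fun u => u ≤ θ)).filter (fun u => u < v)) = Q.filter (fun u => u ≤ θ) := by
    ext u
    have h1 : u ≤ θ → u < v := fun h => lt_of_le_of_lt h hv
    simp only [mem_filter, filter_filter]
    tauto
  have e2 : ((P.filter (fun u => θ < u)).filter (fun u => u < v))
      = P.filter (fun u => θ < u ∧ u < v) := by rw [filter_filter]
  rw [e1, e2]

lemma cnt_split_gt (A : Finset (Fin n)) (θ v : Fin n) (hv : θ < v) :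
    cnt A v = cntLe A θ + (A.filter (fun u => θ < u ∧ u < v)).card := by
  unfold cnt cntLe
  rw [← card_union_of_disjoint (disjoint_left.2 fun u h1 h2 => by
    have g1 := (mem_filter.1 h1).2
    have g2 := (mem_filter.1 h2).2.1
    exact absurd g2 (not_lt.2 g1))]
  congr 1
  ext u
  have h1 : u ≤ θ → u < v := fun h => lt_of_le_of_lt h hv
  have h2 : u < v → ¬ u ≤ θ → θ < u := fun _ h => not_le.1 h
  simp only [mem_filter, mem_union]
  by_cases hc : u ≤ θ <;> tauto

lemma card_split (A : Finset (Fin n)) (θ : Fin n) :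
    A.card = cntLe A θ + (A.filter (fun u => θ < u)).card := by
  unfold cntLe
  rw [← card_filter_add_card_filter_not (p := fun u => u ≤ θ)]
  congr 2
  ext u
  simp [not_le]

end Swap

def Exc (P Q : Finset (Fin n)) : Finset (Fin n) :=
  Finset.univ.filter (fun v => cntLe P v < cntLe Q v)

def sigmaP (P Q : Finset (Fin n)) : Finset (Fin n) × Finset (Fin n) :=
  if h : (Exc P Q).Nonempty then
    (Rset P Q ((Exc P Q).min' h), Rset Q P ((Exc P Q).min' h))
  else (P, Q)

lemma sigmaP_def (P Q : Finset (Fin n)) (h : (Exc P Q).Nonempty) :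
    sigmaP P Q = (Rset P Q ((Exc P Q).min' h), Rset Q P ((Exc P Q).min' h)) := dif_pos h

lemma theta_lt (P Q : Finset (Fin n)) (h : (Exc P Q).Nonempty) :
    cntLe P ((Exc P Q).min' h) < cntLe Q ((Exc P Q).min' h) :=
  (mem_filter.1 ((Exc P Q).min'_mem h)).2

lemma theta_min (P Q : Finset (Fin n)) (h : (Exc P Q).Nonempty) (v : Fin n)
    (hv : v < (Exc P Q).min' h) : cntLe Q v ≤ cntLe P v := by
  by_contra hc
  exact absurd ((Exc P Q).min'_le v (mem_filter.2 ⟨mem_univ v, not_le.1 hc⟩)) (not_le.2 hv)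

lemma cnt_theta (P Q : Finset (Fin n)) (h : (Exc P Q).Nonempty) :
    cnt Q ((Exc P Q).min' h) ≤ cnt P ((Exc P Q).min' h) := by
  set θ := (Exc P Q).min' h with hθ
  rcases Nat.eq_zero_or_pos (θ : ℕ) with h0 | h0
  · have e : ∀ S : Finset (Fin n), cnt S θ = 0 := fun S => by
      rw [cnt, card_eq_zero, filter_eq_empty_iff]
      intro u _
      rw [Fin.lt_def]
      omega
    rw [e, e]
  · have hv' : (θ : ℕ) - 1 < n := by omega
    set v : Fin n := ⟨(θ : ℕ) - 1, hv'⟩ with hvdef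
    have hv2 : (v : ℕ) = (θ : ℕ) - 1 := rfl
    have hvθ : v < θ := by rw [Fin.lt_def]; omega
    have e : ∀ S : Finset (Fin n), cnt S θ = cntLe S v := fun S => by
      rw [cnt, cntLe]
      congr 1
      ext u
      simp only [mem_filter, Fin.lt_def, Fin.le_def]
      constructor
      · exact fun ⟨h1, h2⟩ => ⟨h1, by omega⟩
      · exact fun ⟨h1, h2⟩ => ⟨h1, by omega⟩
    rw [e, e]
    exact theta_min P Q h v hvθ

lemma key1 (P Q : Finset (Fin n)) (h : (Exc P Q).Nonempty) :
    cntLe Q ((Exc P Q).min' h) = cntLe P ((Exc P Q).min' h) + 1 := by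
  have a1 := cntLe_eq_cnt P ((Exc P Q).min' h)
  have a2 := cntLe_eq_cnt Q ((Exc P Q).min' h)
  have a3 := cnt_theta P Q h
  have a4 := theta_lt P Q h
  split_ifs at a1 a2 <;> omega

lemma exc_of_card (P Q : Finset (Fin n)) (hc : P.card < Q.card) : (Exc P Q).Nonempty := by
  obtain ⟨x, hx⟩ := card_pos.1 (lt_of_le_of_lt (Nat.zero_le _) hc)
  have hne : (univ : Finset (Fin n)).Nonempty := ⟨x, mem_univ x⟩
  set v := (univ : Finset (Fin n)).max' hne
  have e : ∀ S : Finset (Fin n), cntLe S v = S.card := fun S => by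
    rw [cntLe, filter_true_of_mem (fun u _ => le_max' _ u (mem_univ u))]
  exact ⟨v, mem_filter.2 ⟨mem_univ v, by rw [e, e]; exact hc⟩⟩

lemma card_Rset (P Q : Finset (Fin n)) (θ : Fin n) :
    (Rset P Q θ).card = cntLe Q θ + (P.filter (fun u => θ < u)).card := by
  rw [Rset, card_union_of_disjoint (disj_filter Q P θ)]
  rfl

lemma sigmaP_card_fst (P Q : Finset (Fin n)) (h : (Exc P Q).Nonempty) :
    (sigmaP P Q).1.card = P.card + 1 := by
  have k1 := key1 P Q h
  have c1 := card_split P ((Exc P Q).min' h)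
  have c2 := card_Rset P Q ((Exc P Q).min' h)
  rw [sigmaP_def P Q h]
  simp only []
  omega

lemma sigmaP_card_snd (P Q : Finset (Fin n)) (h : (Exc P Q).Nonempty) :
    (sigmaP P Q).2.card + 1 = Q.card := by
  have k1 := key1 P Q h
  have c1 := card_split Q ((Exc P Q).min' h)
  have hle : cntLe P ((Exc P Q).min' h) ≤ P.card := card_filter_le _ _
  have c2 := card_Rset Q P ((Exc P Q).min' h)
  rw [sigmaP_def P Q h]
  simp only []
  omega

lemma sigmaP_exceeds (P Q : Finset (Fin n)) (h : (Exc P Q).Nonempty) :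
    cntLe (sigmaP P Q).2 ((Exc P Q).min' h) < cntLe (sigmaP P Q).1 ((Exc P Q).min' h) := by
  rw [sigmaP_def P Q h]
  set θ := (Exc P Q).min' h
  simp only []
  rw [cntLe_R_le Q P θ θ le_rfl, cntLe_R_le P Q θ θ le_rfl]
  exact theta_lt P Q h

lemma exc_sigma (P Q : Finset (Fin n)) (h : (Exc P Q).Nonempty) :
    (Exc (sigmaP P Q).2 (sigmaP P Q).1).Nonempty :=
  ⟨(Exc P Q).min' h, mem_filter.2 ⟨mem_univ _, sigmaP_exceeds P Q h⟩⟩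

lemma min'_exc_sigma (P Q : Finset (Fin n)) (h : (Exc P Q).Nonempty) :
    (Exc (sigmaP P Q).2 (sigmaP P Q).1).min' (exc_sigma P Q h) = (Exc P Q).min' h := by
  apply le_antisymm
  · apply min'_le
    rw [Exc, mem_filter]
    exact ⟨mem_univ _, sigmaP_exceeds P Q h⟩
  · apply le_min'
    intro v hv
    by_contra hc
    have hvθ : v < (Exc P Q).min' h := not_le.1 hc
    have hvle : v ≤ (Exc P Q).min' h := le_of_lt hvθ
    have e1 : cntLe (sigmaP P Q).1 v = cntLe Q v := by
      rw [sigmaP_def P Q h]; exact cntLe_R_le P Q _ v hvle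
    have e2 : cntLe (sigmaP P Q).2 v = cntLe P v := by
      rw [sigmaP_def P Q h]; exact cntLe_R_le Q P _ v hvle
    have := (mem_filter.1 hv).2
    rw [e1, e2] at this
    exact absurd (theta_min P Q h v hvθ) (not_le.2 this)

lemma Rset_filter_le (P Q : Finset (Fin n)) (θ : Fin n) :
    (Rset P Q θ).filter (fun u => u ≤ θ) = Q.filter (fun u => u ≤ θ) := by
  ext u
  simp only [Rset, mem_filter, mem_union]
  have : θ < u → ¬ u ≤ θ := fun h1 => not_le.2 h1
  tauto

lemma Rset_filter_gt (P Q : Finset (Fin n)) (θ : Fin n) :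
    (Rset P Q θ).filter (fun u => θ < u) = P.filter (fun u => θ < u) := by
  ext u
  simp only [Rset, mem_filter, mem_union]
  have : θ < u → ¬ u ≤ θ := fun h1 => not_le.2 h1
  tauto

lemma filter_le_union_gt (Q : Finset (Fin n)) (θ : Fin n) :
    Q.filter (fun u => u ≤ θ) ∪ Q.filter (fun u => θ < u) = Q := by
  ext u
  simp only [mem_filter, mem_union]
  by_cases hc : u ≤ θ
  · tauto
  · have := not_le.1 hc
    tauto

lemma sigma_invol (P Q : Finset (Fin n)) (h : (Exc P Q).Nonempty) :
    sigmaP (sigmaP P Q).2 (sigmaP P Q).1 = (Q, P) := by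
  rw [sigmaP_def _ _ (exc_sigma P Q h), min'_exc_sigma P Q h]
  set θ := (Exc P Q).min' h
  have h1 : (sigmaP P Q).1 = Rset P Q θ := by rw [sigmaP_def P Q h]
  have h2 : (sigmaP P Q).2 = Rset Q P θ := by rw [sigmaP_def P Q h]
  rw [Prod.mk.injEq]
  constructor
  · rw [Rset, h1, h2, Rset_filter_le P Q θ, Rset_filter_gt Q P θ, filter_le_union_gt]
  · rw [Rset, h1, h2, Rset_filter_le Q P θ, Rset_filter_gt P Q θ, filter_le_union_gt]

lemma Fp_factor_congr {S S' : Finset (Fin n)} {l l' : ℤ} (T : Finset (Fin n))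
    (hc : ∀ i ∈ T, ((Sᶜ.filter (fun j => j < i)).card : ℤ) - l
        = ((S'ᶜ.filter (fun j => j < i)).card : ℤ) - l') :
    (∏ i ∈ T, (X i - C (tk ^ (((Sᶜ.filter (fun j => j < i)).card : ℤ) - l))
        : MvPolynomial (Fin n) kk))
      = ∏ i ∈ T, (X i - C (tk ^ (((S'ᶜ.filter (fun j => j < i)).card : ℤ) - l'))) :=
  prod_congr rfl fun i hi => by rw [hc i hi]

lemma Fp_split (l : ℤ) (S : Finset (Fin n)) (θ : Fin n) :
    Fp n l S
      = (∏ i ∈ S.filter (fun u => u ≤ θ),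
          (X i - C (tk ^ (((Sᶜ.filter (fun j => j < i)).card : ℤ) - l))))
        * (∏ i ∈ S.filter (fun u => θ < u),
          (X i - C (tk ^ (((Sᶜ.filter (fun j => j < i)).card : ℤ) - l)))) := by
  rw [Fp, ← prod_filter_mul_prod_filter_not S (fun u => u ≤ θ)]
  have e : S.filter (fun u => ¬ u ≤ θ) = S.filter (fun u => θ < u) := by
    ext u; simp [not_le]
  rw [e]

lemma Fp_union (l : ℤ) (P Q : Finset (Fin n)) (θ : Fin n) :
    Fp n l (Rset P Q θ)
      = (∏ i ∈ Q.filter (fun u => u ≤ θ),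
          (X i - C (tk ^ ((((Rset P Q θ)ᶜ.filter (fun j => j < i)).card : ℤ) - l))))
        * (∏ i ∈ P.filter (fun u => θ < u),
          (X i - C (tk ^ ((((Rset P Q θ)ᶜ.filter (fun j => j < i)).card : ℤ) - l)))) := by
  rw [Fp]
  exact prod_union (disj_filter Q P θ)

lemma sigmaP_term (P Q : Finset (Fin n)) (l : ℤ) (h : (Exc P Q).Nonempty) :
    Fp n l P * Fp n (l - 1) Q
      = Fp n (l - 1) (sigmaP P Q).1 * Fp n l (sigmaP P Q).2 := by
  rw [sigmaP_def P Q h]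
  simp only []
  set θ := (Exc P Q).min' h with hθdef
  have k1 : cntLe Q θ = cntLe P θ + 1 := key1 P Q h
  have c1 : (∏ i ∈ Q.filter (fun u => u ≤ θ),
        (X i - C (tk ^ ((((Rset P Q θ)ᶜ.filter (fun j => j < i)).card : ℤ) - (l - 1)))
        : MvPolynomial (Fin n) kk))
      = ∏ i ∈ Q.filter (fun u => u ≤ θ),
        (X i - C (tk ^ (((Qᶜ.filter (fun j => j < i)).card : ℤ) - (l - 1)))) := by
    apply Fp_factor_congr
    intro i hi
    have e := cnt_R_le P Q θ i (mem_filter.1 hi).2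
    rw [compl_card_eq e]
  have c2 : (∏ i ∈ P.filter (fun u => θ < u),
        (X i - C (tk ^ ((((Rset P Q θ)ᶜ.filter (fun j => j < i)).card : ℤ) - (l - 1)))
        : MvPolynomial (Fin n) kk))
      = ∏ i ∈ P.filter (fun u => θ < u),
        (X i - C (tk ^ (((Pᶜ.filter (fun j => j < i)).card : ℤ) - l))) := by
    apply Fp_factor_congr
    intro i hi
    have hiθ : θ < i := (mem_filter.1 hi).2
    have e1 := cnt_R_gt P Q θ i hiθ
    have e2 := cnt_split_gt P θ i hiθ
    have e3 := cnt_add_compl (Rset P Q θ) i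
    have e4 := cnt_add_compl P i
    omega
  have c3 : (∏ i ∈ P.filter (fun u => u ≤ θ),
        (X i - C (tk ^ ((((Rset Q P θ)ᶜ.filter (fun j => j < i)).card : ℤ) - l))
        : MvPolynomial (Fin n) kk))
      = ∏ i ∈ P.filter (fun u => u ≤ θ),
        (X i - C (tk ^ (((Pᶜ.filter (fun j => j < i)).card : ℤ) - l))) := by
    apply Fp_factor_congr
    intro i hi
    have e := cnt_R_le Q P θ i (mem_filter.1 hi).2
    rw [compl_card_eq e]
  have c4 : (∏ i ∈ Q.filter (fun u => θ < u),
        (X i - C (tk ^ ((((Rset Q P θ)ᶜ.filter (fun j => j < i)).card : ℤ) - l))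
        : MvPolynomial (Fin n) kk))
      = ∏ i ∈ Q.filter (fun u => θ < u),
        (X i - C (tk ^ (((Qᶜ.filter (fun j => j < i)).card : ℤ) - (l - 1)))) := by
    apply Fp_factor_congr
    intro i hi
    have hiθ : θ < i := (mem_filter.1 hi).2
    have e1 := cnt_R_gt Q P θ i hiθ
    have e2 := cnt_split_gt Q θ i hiθ
    have e3 := cnt_add_compl (Rset Q P θ) i
    have e4 := cnt_add_compl Q i
    omega
  rw [Fp_split l P θ, Fp_split (l - 1) Q θ, Fp_union (l - 1) P Q θ, Fp_union l Q P θ,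
    c1, c2, c3, c4]
  ring

lemma core_identity (p q : ℕ) (hq : 1 ≤ q) (hpq : q ≤ p + 1) (l : ℤ) :
    ∑ AB ∈ (Finset.powersetCard p Finset.univ ×ˢ Finset.powersetCard q Finset.univ).filter
        (fun AB : Finset (Fin n) × Finset (Fin n) => ¬ ∀ v, cntLe AB.2 v ≤ cntLe AB.1 v),
      Fp n l AB.1 * Fp n (l - 1) AB.2
    = ∑ AB ∈ Finset.powersetCard (p + 1) (Finset.univ : Finset (Fin n))
        ×ˢ Finset.powersetCard (q - 1) Finset.univ,
      Fp n (l - 1) AB.1 * Fp n l AB.2 := by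
  refine Finset.sum_nbij' (fun AB => sigmaP AB.1 AB.2)
    (fun AB => ((sigmaP AB.2 AB.1).2, (sigmaP AB.2 AB.1).1)) ?_ ?_ ?_ ?_ ?_
  · intro AB hAB
    rw [mem_filter, mem_product, mem_powersetCard_univ, mem_powersetCard_univ] at hAB
    obtain ⟨⟨hA, hB⟩, hinv⟩ := hAB
    push_neg at hinv
    obtain ⟨v, hv⟩ := hinv
    have hexc : (Exc AB.1 AB.2).Nonempty := ⟨v, mem_filter.2 ⟨mem_univ v, hv⟩⟩
    rw [mem_product, mem_powersetCard_univ, mem_powersetCard_univ]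
    have d1 := sigmaP_card_fst AB.1 AB.2 hexc
    have d2 := sigmaP_card_snd AB.1 AB.2 hexc
    constructor
    · omega
    · omega
  · intro AB hAB
    rw [mem_product, mem_powersetCard_univ, mem_powersetCard_univ] at hAB
    obtain ⟨hA, hB⟩ := hAB
    have hexc : (Exc AB.2 AB.1).Nonempty := exc_of_card AB.2 AB.1 (by omega)
    have d1 := sigmaP_card_fst AB.2 AB.1 hexc
    have d2 := sigmaP_card_snd AB.2 AB.1 hexc
    rw [mem_filter, mem_product, mem_powersetCard_univ, mem_powersetCard_univ]
    simp only []
    refine ⟨⟨by omega, by omega⟩, ?_⟩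
    intro hall
    exact absurd (sigmaP_exceeds AB.2 AB.1 hexc)
      (not_lt.2 (hall ((Exc AB.2 AB.1).min' hexc)))
  · intro AB hAB
    rw [mem_filter, mem_product] at hAB
    obtain ⟨-, hinv⟩ := hAB
    push_neg at hinv
    obtain ⟨v, hv⟩ := hinv
    have hexc : (Exc AB.1 AB.2).Nonempty := ⟨v, mem_filter.2 ⟨mem_univ v, hv⟩⟩
    have e := sigma_invol AB.1 AB.2 hexc
    rw [e]
  · intro AB hAB
    rw [mem_product, mem_powersetCard_univ, mem_powersetCard_univ] at hAB
    obtain ⟨hA, hB⟩ := hAB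
    have hexc : (Exc AB.2 AB.1).Nonempty := exc_of_card AB.2 AB.1 (by omega)
    have e := sigma_invol AB.2 AB.1 hexc
    simp only []
    rw [e]
  · intro AB hAB
    rw [mem_filter, mem_product] at hAB
    obtain ⟨-, hinv⟩ := hAB
    push_neg at hinv
    obtain ⟨v, hv⟩ := hinv
    exact sigmaP_term AB.1 AB.2 l ⟨v, mem_filter.2 ⟨mem_univ v, hv⟩⟩

lemma aeval_Fp (l : ℤ) (S : Finset (Fin n)) :
    (aeval (fun i : Fin n => (C tk * X i : MvPolynomial (Fin n) kk))) (Fp n l S)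
      = C (tk ^ S.card) * Fp n (l + 1) S := by
  unfold Fp
  rw [map_prod]
  have e : ∀ i ∈ S,
      (aeval (fun i : Fin n => (C tk * X i : MvPolynomial (Fin n) kk)))
        (X i - C (tk ^ (((Sᶜ.filter (fun j => j < i)).card : ℤ) - l)))
      = C tk * (X i - C (tk ^ (((Sᶜ.filter (fun j => j < i)).card : ℤ) - (l + 1)))) := by
    intro i _
    rw [map_sub, aeval_X, aeval_C,
      show ((Sᶜ.filter (fun j => j < i)).card : ℤ) - l
        = (((Sᶜ.filter (fun j => j < i)).card : ℤ) - (l + 1)) + 1 from by ring,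
      zpow_add_one₀ tk_ne_zero, map_mul, algebraMap_eq]
    ring
  rw [prod_congr rfl e, prod_mul_distrib, prod_const, ← map_pow]

lemma aeval_estar (m : ℕ) (l : ℤ) :
    (aeval (fun i : Fin n => (C tk * X i : MvPolynomial (Fin n) kk))) (estar n m l)
      = C (tk ^ m) * ∑ S ∈ Finset.powersetCard m (Finset.univ : Finset (Fin n)),
          Fp n (l + 1) S := by
  rw [estar_eq, map_sum, mul_sum]
  apply sum_congr rfl
  intro S hS
  rw [aeval_Fp, mem_powersetCard_univ.1 hS]

lemma Fp_congr_l {l l' : ℤ} (h : l = l') (S : Finset (Fin n)) : Fp n l S = Fp n l' S := by rw [h]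

/-- products over `Fin m` with at most 2 elements -/
lemma prod_fin_le_two {M : Type*} [CommMonoid M] (m : ℕ) (hm : m ≤ 2) (g : Fin m → M) :
    ∏ j, g j = (if h : 0 < m then g ⟨0, h⟩ else 1) * (if h : 1 < m then g ⟨1, h⟩ else 1) := by
  interval_cases m
  · simp
  · rw [Fin.prod_univ_one]
    simp
  · rw [Fin.prod_univ_two]
    norm_num

lemma prod_dite_lt {M : Type*} [CommMonoid M] {m : ℕ} (hm : m ≤ n)
    (G : (i : Fin n) → (i : ℕ) < m → M) :
    ∏ i : Fin n, (if h : (i : ℕ) < m then G i h else 1)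
      = ∏ i' : Fin m, G (Fin.castLE hm i') i'.isLt := by
  rw [Fintype.prod_dite]
  rw [Finset.prod_const_one, mul_one]
  exact Fintype.prod_equiv
    (⟨fun i' : Fin m => (⟨Fin.castLE hm i', i'.isLt⟩ : {i : Fin n // (i : ℕ) < m}),
      fun x => ⟨(x.1 : ℕ), x.2⟩, fun i' => rfl, fun x => rfl⟩ : Fin m ≃ {i : Fin n // (i : ℕ) < m}).symm
    _ _ (fun x => rfl)

lemma card_filter_lt_fin {m : ℕ} (i : Fin m) :
    ((Finset.univ : Finset (Fin m)).filter (fun j => j < i)).card = (i : ℕ) := by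
  rw [show (Finset.univ.filter (fun j : Fin m => j < i)) = Finset.Iio i from by ext u; simp,
    Fin.card_Iio]

lemma cnt_image_strictMono {m : ℕ} (f : Fin m → Fin n) (hf : StrictMono f) (i : Fin m) :
    cnt (image f univ) (f i) = (i : ℕ) := by
  unfold cnt
  rw [show (image f univ).filter (fun u => u < f i) = image f (univ.filter (fun j => j < i)) from ?_,
    card_image_of_injective _ hf.injective, card_filter_lt_fin]
  ext u
  simp only [mem_image, mem_filter, mem_univ, true_and]
  constructor
  · rintro ⟨⟨j, rfl⟩, hlt⟩
    exact ⟨j, hf.lt_iff_lt.1 hlt, rfl⟩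
  · rintro ⟨j, hj, rfl⟩
    exact ⟨⟨j, rfl⟩, hf hj⟩

lemma cntLe_image {m : ℕ} (f : Fin m → Fin n) (hf : Function.Injective f) (v : Fin n) :
    cntLe (image f univ) v = (univ.filter (fun j => f j ≤ v)).card := by
  unfold cntLe
  rw [show (image f univ).filter (fun u => u ≤ v) = image f (univ.filter (fun j => f j ≤ v)) from ?_,
    card_image_of_injective _ hf]
  ext u
  simp only [mem_image, mem_filter, mem_univ, true_and]
  constructor
  · rintro ⟨⟨j, rfl⟩, hle⟩
    exact ⟨j, hle, rfl⟩
  · rintro ⟨j, hj, rfl⟩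
    exact ⟨⟨j, rfl⟩, hj⟩

lemma valid_iff_rank {p q : ℕ} (hqp : q ≤ p) (c : Fin p → Fin n) (d : Fin q → Fin n)
    (hc : StrictMono c) (hd : StrictMono d) :
    (∀ i : Fin q, c (Fin.castLE hqp i) ≤ d i) ↔
      ∀ v, cntLe (image d univ) v ≤ cntLe (image c univ) v := by
  constructor
  · intro hrow v
    rw [cntLe_image c hc.injective, cntLe_image d hd.injective]
    apply card_le_card_of_injOn (fun i => Fin.castLE hqp i)
    · intro i hi
      rw [mem_coe, mem_filter] at hi ⊢
      exact ⟨mem_univ _, le_trans (hrow i) hi.2⟩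
    · exact fun x _ y _ hxy => (Fin.strictMono_castLE hqp).injective hxy
  · intro hcnt i
    have h1 := hcnt (d i)
    rw [cntLe_image c hc.injective, cntLe_image d hd.injective] at h1
    have h2 : Finset.Iic i ⊆ univ.filter (fun j => d j ≤ d i) := fun j hj =>
      mem_filter.2 ⟨mem_univ _, hd.monotone (mem_Iic.1 hj)⟩
    have h3 : (i : ℕ) + 1 ≤ (univ.filter (fun j => d j ≤ d i)).card := by
      rw [← Fin.card_Iic i]
      exact card_le_card h2
    by_contra hcon
    have hlt : d i < c (Fin.castLE hqp i) := not_le.1 hcon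
    have h4 : univ.filter (fun j => c j ≤ d i) ⊆ Finset.Iio (Fin.castLE hqp i) := by
      intro j hj
      rw [mem_Iio]
      by_contra hj2
      have : c (Fin.castLE hqp i) ≤ c j := hc.monotone (not_lt.1 hj2)
      exact absurd (le_trans this (mem_filter.1 hj).2) (not_le.2 hlt)
    have h5 := card_le_card h4
    rw [Fin.card_Iio] at h5
    simp only [Fin.coe_castLE] at h5
    omega

section Lamf

def lamf (a b : ℕ) : Fin n → ℕ := fun i => if (i : ℕ) < a then 2 else if (i : ℕ) < a + b then 1 else 0

variable {a b : ℕ}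

lemma lamf_le_two (i : Fin n) : lamf a b i ≤ 2 := by unfold lamf; split_ifs <;> omega
lemma lamf_pos {i : Fin n} (h : (i : ℕ) < a + b) : 0 < lamf a b i := by
  unfold lamf; split_ifs <;> omega
lemma lamf_two {i : Fin n} (h : (i : ℕ) < a) : 1 < lamf a b i := by
  unfold lamf; split_ifs <;> omega
lemma lamf_pos_rev {i : Fin n} (h : 0 < lamf a b i) : (i : ℕ) < a + b := by
  unfold lamf at h; split_ifs at h <;> omega
lemma lamf_two_rev {i : Fin n} (h : 1 < lamf a b i) : (i : ℕ) < a := by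
  unfold lamf at h; split_ifs at h <;> omega

def colA (hab : a + b ≤ n) (T : (i : Fin n) → Fin (lamf a b i) → Fin n) :
    Fin (a + b) → Fin n :=
  fun i => T (Fin.castLE hab i) ⟨0, lamf_pos (by simpa using i.isLt)⟩

def colB (hab : a + b ≤ n) (T : (i : Fin n) → Fin (lamf a b i) → Fin n) :
    Fin a → Fin n :=
  fun i => T (Fin.castLE hab (Fin.castLE (Nat.le_add_right a b) i))
    ⟨1, lamf_two (by simpa using i.isLt)⟩

def toTab (hab : a + b ≤ n) (AB : Finset (Fin n) × Finset (Fin n)) :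
    (i : Fin n) → Fin (lamf a b i) → Fin n :=
  fun i j =>
    if hc : AB.1.card = a + b ∧ AB.2.card = a then
      if hj : (j : ℕ) = 0 then
        AB.1.orderEmbOfFin hc.1 ⟨(i : ℕ), lamf_pos_rev (lt_of_le_of_lt (Nat.zero_le _) j.isLt)⟩
      else
        AB.2.orderEmbOfFin hc.2
          ⟨(i : ℕ), lamf_two_rev (lt_of_le_of_lt (Nat.one_le_iff_ne_zero.2 hj) j.isLt)⟩
    else i

lemma image_orderEmbOfFin {S : Finset (Fin n)} {m : ℕ} (h : S.card = m) :
    image (S.orderEmbOfFin h) univ = S := by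
  ext v
  simp only [mem_image, mem_univ, true_and]
  constructor
  · rintro ⟨i, rfl⟩
    exact orderEmbOfFin_mem S h i
  · intro hv
    have : v ∈ Set.range (S.orderEmbOfFin h) := by rw [range_orderEmbOfFin]; exact hv
    obtain ⟨i, hi⟩ := this
    exact ⟨i, hi⟩

lemma colA_strictMono (hab : a + b ≤ n) {T : (i : Fin n) → Fin (lamf a b i) → Fin n}
    (hT : IsSSYT (lamf a b) T) : StrictMono (colA hab T) :=
  fun _ _ hlt => hT.2 _ _ _ _ (Fin.strictMono_castLE hab hlt) rfl

lemma colB_strictMono (hab : a + b ≤ n) {T : (i : Fin n) → Fin (lamf a b i) → Fin n}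
    (hT : IsSSYT (lamf a b) T) : StrictMono (colB hab T) :=
  fun _ _ hlt => hT.2 _ _ _ _
    (Fin.strictMono_castLE hab (Fin.strictMono_castLE (Nat.le_add_right a b) hlt)) rfl

lemma row_le (hab : a + b ≤ n) {T : (i : Fin n) → Fin (lamf a b i) → Fin n}
    (hT : IsSSYT (lamf a b) T) (i : Fin a) :
    colA hab T (Fin.castLE (Nat.le_add_right a b) i) ≤ colB hab T i :=
  hT.1 _ _ _ (by rw [Fin.mk_le_mk]; omega)

lemma prod_lamf_split {M : Type*} [CommMonoid M] (g : (i : Fin n) → Fin (lamf a b i) → M) :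
    ∏ i, ∏ j, g i j
      = (∏ i : Fin n, if h : (i : ℕ) < a + b then g i ⟨0, lamf_pos h⟩ else 1)
        * (∏ i : Fin n, if h : (i : ℕ) < a then g i ⟨1, lamf_two h⟩ else 1) := by
  rw [← prod_mul_distrib]
  apply prod_congr rfl
  intro i _
  rw [prod_fin_le_two (lamf a b i) (lamf_le_two i) (g i)]
  congr 1
  · by_cases h1 : (i : ℕ) < a + b
    · rw [dif_pos (lamf_pos h1), dif_pos h1]
    · rw [dif_neg (fun hc => h1 (lamf_pos_rev hc)), dif_neg h1]
  · by_cases h1 : (i : ℕ) < a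
    · rw [dif_pos (lamf_two h1), dif_pos h1]
    · rw [dif_neg (fun hc => h1 (lamf_two_rev hc)), dif_neg h1]


lemma chain0 (hab : a + b ≤ n) {T : (i : Fin n) → Fin (lamf a b i) → Fin n}
    (hT : IsSSYT (lamf a b) T) :
    (∏ i : Fin n, if h : (i : ℕ) < a + b then
        (X (T i ⟨0, lamf_pos h⟩)
          - C (tk ^ ((((⟨0, lamf_pos h⟩ : Fin (lamf a b i)) : ℤ) - (i : ℤ))
              + ((T i ⟨0, lamf_pos h⟩ : ℤ) + 1) - (n : ℤ))) : MvPolynomial (Fin n) kk)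
      else 1)
      = Fp n ((n : ℤ) - 1) (image (colA hab T) univ) := by
  rw [prod_dite_lt hab, Fp,
    prod_image (fun x _ y _ hxy => (colA_strictMono hab hT).injective hxy)]
  apply prod_congr rfl
  intro i' _
  have h1 := cnt_add_compl (image (colA hab T) univ) (colA hab T i')
  have h2 := cnt_image_strictMono (colA hab T) (colA_strictMono hab hT) i'
  rw [cnt] at h1 h2
  show (X (colA hab T i')
      - C (tk ^ (((((0:ℕ) : ℤ)) - (((Fin.castLE hab i' : Fin n) : ℕ) : ℤ))
          + ((((colA hab T i' : Fin n) : ℕ) : ℤ) + 1) - (n : ℤ))) : MvPolynomial (Fin n) kk)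
    = X (colA hab T i')
      - C (tk ^ (((((image (colA hab T) univ)ᶜ.filter
            (fun j => j < colA hab T i')).card : ℤ)) - ((n : ℤ) - 1)))
  rw [show (((((0:ℕ) : ℤ)) - (((Fin.castLE hab i' : Fin n) : ℕ) : ℤ))
          + ((((colA hab T i' : Fin n) : ℕ) : ℤ) + 1) - (n : ℤ))
      = (((((image (colA hab T) univ)ᶜ.filter
            (fun j => j < colA hab T i')).card : ℤ)) - ((n : ℤ) - 1)) from by
    have h3 : ((Fin.castLE hab i' : Fin n) : ℕ) = (i' : ℕ) := rfl
    omega]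

lemma chain1 (hab : a + b ≤ n) {T : (i : Fin n) → Fin (lamf a b i) → Fin n}
    (hT : IsSSYT (lamf a b) T) :
    (∏ i : Fin n, if h : (i : ℕ) < a then
        (X (T i ⟨1, lamf_two h⟩)
          - C (tk ^ ((((⟨1, lamf_two h⟩ : Fin (lamf a b i)) : ℤ) - (i : ℤ))
              + ((T i ⟨1, lamf_two h⟩ : ℤ) + 1) - (n : ℤ))) : MvPolynomial (Fin n) kk)
      else 1)
      = Fp n ((n : ℤ) - 2) (image (colB hab T) univ) := by
  rw [prod_dite_lt (le_trans (Nat.le_add_right a b) hab), Fp,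
    prod_image (fun x _ y _ hxy => (colB_strictMono hab hT).injective hxy)]
  apply prod_congr rfl
  intro i' _
  have h1 := cnt_add_compl (image (colB hab T) univ) (colB hab T i')
  have h2 := cnt_image_strictMono (colB hab T) (colB_strictMono hab hT) i'
  rw [cnt] at h1 h2
  show (X (colB hab T i')
      - C (tk ^ (((((1:ℕ) : ℤ))
            - (((Fin.castLE (le_trans (Nat.le_add_right a b) hab) i' : Fin n) : ℕ) : ℤ))
          + ((((colB hab T i' : Fin n) : ℕ) : ℤ) + 1) - (n : ℤ))) : MvPolynomial (Fin n) kk)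
    = X (colB hab T i')
      - C (tk ^ (((((image (colB hab T) univ)ᶜ.filter
            (fun j => j < colB hab T i')).card : ℤ)) - ((n : ℤ) - 2)))
  rw [show (((((1:ℕ) : ℤ))
            - (((Fin.castLE (le_trans (Nat.le_add_right a b) hab) i' : Fin n) : ℕ) : ℤ))
          + ((((colB hab T i' : Fin n) : ℕ) : ℤ) + 1) - (n : ℤ))
      = (((((image (colB hab T) univ)ᶜ.filter
            (fun j => j < colB hab T i')).card : ℤ)) - ((n : ℤ) - 2)) from by
    have h3 : ((Fin.castLE (le_trans (Nat.le_add_right a b) hab) i' : Fin n) : ℕ) = (i' : ℕ) := rfl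
    omega]


lemma sstar_eq_pairs (a b : ℕ) (ha : 1 ≤ a) (hab : a + b ≤ n) :
    sstar n (lamf a b)
      = ∑ AB ∈ (Finset.powersetCard (a + b) (Finset.univ : Finset (Fin n))
            ×ˢ Finset.powersetCard a Finset.univ).filter
          (fun AB : Finset (Fin n) × Finset (Fin n) => ∀ v, cntLe AB.2 v ≤ cntLe AB.1 v),
        Fp n ((n : ℤ) - 1) AB.1 * Fp n ((n : ℤ) - 2) AB.2 := by
  rw [sstar]
  letI := Classical.decPred
    (fun T : (i : Fin n) → Fin (lamf a b i) → Fin n => IsSSYT (lamf a b) T)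
  refine Finset.sum_nbij'
    (fun T => (image (colA hab T) univ, image (colB hab T) univ)) (toTab hab) ?_ ?_ ?_ ?_ ?_
  · intro T hT
    have hT' : IsSSYT (lamf a b) T := (mem_filter.1 hT).2
    rw [mem_filter, mem_product, mem_powersetCard_univ, mem_powersetCard_univ]
    have cA : (image (colA hab T) univ).card = a + b := by
      rw [card_image_of_injective _ (colA_strictMono hab hT').injective, card_univ,
        Fintype.card_fin]
    have cB : (image (colB hab T) univ).card = a := by
      rw [card_image_of_injective _ (colB_strictMono hab hT').injective, card_univ,
        Fintype.card_fin]
    exact ⟨⟨cA, cB⟩, (valid_iff_rank (Nat.le_add_right a b) _ _ (colA_strictMono hab hT')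
      (colB_strictMono hab hT')).1 (row_le hab hT')⟩
  · intro AB hAB
    rw [mem_filter, mem_product, mem_powersetCard_univ, mem_powersetCard_univ] at hAB
    obtain ⟨⟨hA, hB⟩, hval⟩ := hAB
    rw [mem_filter]
    refine ⟨mem_univ _, ?_⟩
    have hrank : ∀ i : Fin a, AB.1.orderEmbOfFin hA (Fin.castLE (Nat.le_add_right a b) i)
        ≤ AB.2.orderEmbOfFin hB i := by
      apply (valid_iff_rank (Nat.le_add_right a b) _ _ (AB.1.orderEmbOfFin hA).strictMono
        (AB.2.orderEmbOfFin hB).strictMono).2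
      rw [image_orderEmbOfFin, image_orderEmbOfFin]
      exact hval
    constructor
    · intro i j j' hjj'
      by_cases h0 : (j : ℕ) = (j' : ℕ)
      · rw [show j = j' from Fin.ext h0]
      · have hlt : (j : ℕ) < (j' : ℕ) := lt_of_le_of_ne hjj' h0
        have hj'2 := j'.isLt
        have hl2 := lamf_le_two (a := a) (b := b) i
        have hj0 : (j : ℕ) = 0 := by omega
        have hj1 : (j' : ℕ) ≠ 0 := by omega
        have h12 : 1 < lamf a b i := by omega
        have hia : (i : ℕ) < a := lamf_two_rev h12
        unfold toTab
        rw [dif_pos ⟨hA, hB⟩, dif_pos hj0, dif_pos ⟨hA, hB⟩, dif_neg hj1]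
        exact hrank ⟨(i : ℕ), hia⟩
    · intro i i' j j' hii' hjj
      have hii'2 : (i : ℕ) < (i' : ℕ) := hii'
      unfold toTab
      by_cases h0 : (j : ℕ) = 0
      · rw [dif_pos ⟨hA, hB⟩, dif_pos h0, dif_pos ⟨hA, hB⟩,
          dif_pos (show (j' : ℕ) = 0 from by omega)]
        exact (AB.1.orderEmbOfFin hA).strictMono (Fin.mk_lt_mk.2 hii'2)
      · rw [dif_pos ⟨hA, hB⟩, dif_neg h0, dif_pos ⟨hA, hB⟩,
          dif_neg (show ¬ (j' : ℕ) = 0 from by omega)]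
        exact (AB.2.orderEmbOfFin hB).strictMono (Fin.mk_lt_mk.2 hii'2)
  · intro T hT
    have hT' : IsSSYT (lamf a b) T := (mem_filter.1 hT).2
    have cA : (image (colA hab T) univ).card = a + b := by
      rw [card_image_of_injective _ (colA_strictMono hab hT').injective, card_univ,
        Fintype.card_fin]
    have cB : (image (colB hab T) univ).card = a := by
      rw [card_image_of_injective _ (colB_strictMono hab hT').injective, card_univ,
        Fintype.card_fin]
    funext i j
    show toTab hab _ i j = T i j
    unfold toTab
    rw [dif_pos ⟨cA, cB⟩]
    by_cases h0 : (j : ℕ) = 0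
    · rw [dif_pos h0]
      have hu : colA hab T = (image (colA hab T) univ).orderEmbOfFin cA :=
        orderEmbOfFin_unique cA (fun x => mem_image_of_mem _ (mem_univ x))
          (colA_strictMono hab hT')
      rw [← hu]
      rcases j with ⟨jv, hjlt⟩
      have h0' : jv = 0 := h0
      subst h0'
      rfl
    · rw [dif_neg h0]
      have hu : colB hab T = (image (colB hab T) univ).orderEmbOfFin cB :=
        orderEmbOfFin_unique cB (fun x => mem_image_of_mem _ (mem_univ x))
          (colB_strictMono hab hT')
      rw [← hu]
      rcases j with ⟨jv, hjlt⟩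
      have h0' : jv ≠ 0 := h0
      have hle2 := lamf_le_two (a := a) (b := b) i
      have h1' : jv = 1 := by omega
      subst h1'
      rfl
  · intro AB hAB
    rw [mem_filter, mem_product, mem_powersetCard_univ, mem_powersetCard_univ] at hAB
    obtain ⟨⟨hA, hB⟩, -⟩ := hAB
    rw [Prod.mk.injEq]
    constructor
    · rw [image_congr (g := AB.1.orderEmbOfFin hA) (fun i' _ => by
        unfold colA toTab
        rw [dif_pos ⟨hA, hB⟩, dif_pos rfl]
        rfl), image_orderEmbOfFin]
    · rw [image_congr (g := AB.2.orderEmbOfFin hB) (fun i' _ => by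
        unfold colB toTab
        rw [dif_pos ⟨hA, hB⟩, dif_neg Nat.one_ne_zero]
        rfl), image_orderEmbOfFin]
  · intro T hT
    have hT' : IsSSYT (lamf a b) T := (mem_filter.1 hT).2
    simp only []
    refine Eq.trans (prod_lamf_split _) ?_
    rw [chain0 hab hT', chain1 hab hT']

end Lamf

lemma main (n a b : ℕ) (ha : 1 ≤ a) (hab : a + b ≤ n) :
    (aeval (fun i : Fin n => (C tk * X i : MvPolynomial (Fin n) kk)))
        (sstar n (fun i : Fin n => if (i : ℕ) < a then 2 else if (i : ℕ) < a + b then 1 else 0))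
      = C (tk ^ a)
          * (aeval (fun i : Fin n => (C tk * X i : MvPolynomial (Fin n) kk)))
              (estar n (a + b) ((n : ℤ) - 1))
          * estar n a ((n : ℤ) - 1)
        - C (tk ^ (a + b + 1)) * estar n (a + b + 1) ((n : ℤ) - 1)
          * (aeval (fun i : Fin n => (C tk * X i : MvPolynomial (Fin n) kk)))
              (estar n (a - 1) ((n : ℤ) - 1)) := by
  have hfun : (fun i : Fin n => if (i : ℕ) < a then 2 else if (i : ℕ) < a + b then 1 else 0)
      = lamf a b := rfl
  rw [hfun, sstar_eq_pairs a b ha hab, map_sum]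
  have hL : ∀ AB ∈ (Finset.powersetCard (a + b) (Finset.univ : Finset (Fin n))
        ×ˢ Finset.powersetCard a Finset.univ).filter
      (fun AB : Finset (Fin n) × Finset (Fin n) => ∀ v, cntLe AB.2 v ≤ cntLe AB.1 v),
      (aeval (fun i : Fin n => (C tk * X i : MvPolynomial (Fin n) kk)))
        (Fp n ((n : ℤ) - 1) AB.1 * Fp n ((n : ℤ) - 2) AB.2)
      = (C tk ^ (a + b) * C tk ^ a)
          * (Fp n ((n : ℤ) - 1 + 1) AB.1 * Fp n ((n : ℤ) - 2 + 1) AB.2) := by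
    intro AB hAB
    rw [mem_filter, mem_product, mem_powersetCard_univ, mem_powersetCard_univ] at hAB
    rw [map_mul, aeval_Fp, aeval_Fp, hAB.1.1, hAB.1.2, map_pow, map_pow]
    ring
  rw [Finset.sum_congr rfl hL, ← mul_sum]
  rw [aeval_estar, aeval_estar, estar_eq n a, estar_eq n (a + b + 1), map_pow, map_pow,
    map_pow, map_pow]
  simp only [show ((n : ℤ) - 1 + 1) = (n : ℤ) from by ring,
    show ((n : ℤ) - 2 + 1) = ((n : ℤ) - 1) from by ring]
  set S1 := ∑ S ∈ Finset.powersetCard (a + b) (Finset.univ : Finset (Fin n)), Fp n (n : ℤ) S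
    with hS1
  set S2 := ∑ S ∈ Finset.powersetCard a (Finset.univ : Finset (Fin n)), Fp n ((n : ℤ) - 1) S
    with hS2
  set S3 := ∑ S ∈ Finset.powersetCard (a + b + 1) (Finset.univ : Finset (Fin n)),
      Fp n ((n : ℤ) - 1) S with hS3
  set S4 := ∑ S ∈ Finset.powersetCard (a - 1) (Finset.univ : Finset (Fin n)), Fp n (n : ℤ) S
    with hS4
  have hV : (∑ AB ∈ (Finset.powersetCard (a + b) (Finset.univ : Finset (Fin n))
        ×ˢ Finset.powersetCard a Finset.univ).filter
      (fun AB : Finset (Fin n) × Finset (Fin n) => ∀ v, cntLe AB.2 v ≤ cntLe AB.1 v),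
      Fp n (n : ℤ) AB.1 * Fp n ((n : ℤ) - 1) AB.2) = S1 * S2 - S3 * S4 := by
    have h1 : S1 * S2 = ∑ AB ∈ (Finset.powersetCard (a + b) (Finset.univ : Finset (Fin n))
        ×ˢ Finset.powersetCard a Finset.univ),
        Fp n (n : ℤ) AB.1 * Fp n ((n : ℤ) - 1) AB.2 := by
      rw [hS1, hS2, Finset.sum_mul_sum]
      exact (Finset.sum_product' _ _ (fun u v => Fp n (n : ℤ) u * Fp n ((n : ℤ) - 1) v)).symm
    have h2 := Finset.sum_filter_add_sum_filter_not
      (Finset.powersetCard (a + b) (Finset.univ : Finset (Fin n))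
        ×ˢ Finset.powersetCard a Finset.univ)
      (fun AB : Finset (Fin n) × Finset (Fin n) => ∀ v, cntLe AB.2 v ≤ cntLe AB.1 v)
      (fun AB => Fp n (n : ℤ) AB.1 * Fp n ((n : ℤ) - 1) AB.2)
    have h3 := core_identity (n := n) (a + b) a ha (by omega) ((n : ℤ))
    have h4 : (∑ AB ∈ Finset.powersetCard (a + b + 1) (Finset.univ : Finset (Fin n))
        ×ˢ Finset.powersetCard (a - 1) Finset.univ,
        Fp n ((n : ℤ) - 1) AB.1 * Fp n (n : ℤ) AB.2) = S3 * S4 := by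
      rw [hS3, hS4, Finset.sum_mul_sum]
      exact Finset.sum_product' _ _ (fun u v => Fp n ((n : ℤ) - 1) u * Fp n (n : ℤ) v)
    rw [← h1] at h2
    rw [h3, h4] at h2
    exact eq_sub_of_add_eq h2
  rw [hV]
  have hpow : (C tk : MvPolynomial (Fin n) kk) ^ (a + b + 1) * (C tk) ^ (a - 1)
      = (C tk) ^ (a + b) * (C tk) ^ a := by
    rw [← pow_add, ← pow_add]
    congr 1
    omega
  linear_combination (S3 * S4) * hpow

end TwoColumn

/-- Two-column `t`-interpolation Schur polynomial identity for
`λ = (2^a, 1^b)`: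
`s*_λ(t·x;t) = t^a e*_{a+b}(t·x;t) e*_a(x;t) − t^{a+b+1} e*_{a+b+1}(x;t) e*_{a−1}(t·x;t)`. -/
theorem two_column_schur (n : ℕ) (a b : ℕ) (ha : 1 ≤ a) (hab : a + b ≤ n) :
    (aeval (fun i : Fin n => (C tk * X i : MvPolynomial (Fin n) kk)))
        (sstar n (fun i : Fin n => if (i : ℕ) < a then 2 else if (i : ℕ) < a + b then 1 else 0))
      = C (tk ^ a)
          * (aeval (fun i : Fin n => (C tk * X i : MvPolynomial (Fin n) kk)))
              (estar n (a + b) ((n : ℤ) - 1))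
          * estar n a ((n : ℤ) - 1)
        - C (tk ^ (a + b + 1)) * estar n (a + b + 1) ((n : ℤ) - 1)
          * (aeval (fun i : Fin n => (C tk * X i : MvPolynomial (Fin n) kk)))
              (estar n (a - 1) ((n : ℤ) - 1)) :=
  TwoColumn.main n a b ha hab
end
end

section
/- Variable-splitting recurrence for interpolation elementary polynomials: For every 1 ≤ d ≤ n, e*_d(x₁,…,xₙ;t) = (x₁ − 1/t^{n−1}) · t^{−(d−1)} · ẽ*_{d−1}(t·x₂, …, t·xₙ; t) + ẽ*_d(x₂,…,xₙ;t), where e*_d denotes the n-variable interpolation elementary polynomial and ẽ*_m denotes the (n−1)-variable interpolation elementary polynomial in the variables x₂,…,xₙ (defined with t^{n−2} in place of t^{n−1}), with the convention ẽ*_n = 0. -/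
open MvPolynomial

noncomputable section

open Finset

variable {n : ℕ}

private def emb (n : ℕ) : Fin n ↪ Fin (n + 1) := ⟨Fin.succ, Fin.succ_injective n⟩

private lemma zero_not_mem_map (T : Finset (Fin n)) : (0 : Fin (n+1)) ∉ T.map (emb n) := by
  simp [emb, Fin.succ_ne_zero, eq_comm]

private lemma map_succ_compl (T : Finset (Fin n)) :
    (T.map (emb n))ᶜ = insert 0 (Tᶜ.map (emb n)) := by
  ext i
  cases i using Fin.cases with
  | zero => simp [emb, Fin.succ_ne_zero, eq_comm]
  | succ i => simp [emb, (Fin.succ_injective n).eq_iff, (Fin.succ_ne_zero i)]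

private lemma insert_compl (T : Finset (Fin n)) :
    (insert (0 : Fin (n+1)) (T.map (emb n)))ᶜ = Tᶜ.map (emb n) := by
  rw [compl_insert, map_succ_compl, erase_insert (by simpa using zero_not_mem_map Tᶜ)]

private lemma filter_map_lt (T : Finset (Fin n)) (i : Fin n) :
    ((T.map (emb n)).filter (fun j => j < Fin.succ i)).card
      = (T.filter (fun j => j < i)).card := by
  rw [filter_map, card_map]
  congr 1
  ext j
  simp [emb, Fin.succ_lt_succ_iff, Finset.mem_filter, Function.comp_def]

private lemma lemA (T : Finset (Fin n)) :
    (∏ i ∈ T.map (emb n),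
        (X i - C (tk ^ ((((T.map (emb n))ᶜ.filter (fun j => j < i)).card : ℤ) - (n : ℤ))))
      : MvPolynomial (Fin (n+1)) kk)
      = rename Fin.succ
          (∏ i ∈ T, (X i - C (tk ^ (((Tᶜ.filter (fun j => j < i)).card : ℤ) - ((n : ℤ) - 1))))) := by
  rw [prod_map, map_prod]
  refine Finset.prod_congr rfl fun i hi => ?_
  rw [map_sub, rename_X, rename_C]
  have hcard : (((T.map (emb n))ᶜ.filter (fun j => j < (emb n) i)).card : ℤ)
      = ((Tᶜ.filter (fun j => j < i)).card : ℤ) + 1 := by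
    show (((T.map (emb n))ᶜ.filter (fun j => j < Fin.succ i)).card : ℤ) = _
    rw [map_succ_compl, filter_insert, if_pos (Fin.succ_pos i),
      card_insert_of_notMem (fun h => zero_not_mem_map Tᶜ (mem_filter.mp h).1),
      filter_map_lt]
    push_cast; ring
  show (X (Fin.succ i) : MvPolynomial (Fin (n+1)) kk) - _ = _
  rw [hcard]
  ring_nf

private lemma lemB (ht : tk ≠ 0) (T : Finset (Fin n)) (e : ℕ) (hT : T.card = e) :
    (∏ i ∈ insert 0 (T.map (emb n)),
        (X i - C (tk ^ ((((insert (0 : Fin (n+1)) (T.map (emb n)))ᶜ.filter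
            (fun j => j < i)).card : ℤ) - (n : ℤ)))))
      = (X 0 - C (tk ^ (-(n : ℤ)))) * C (tk ^ (-(e : ℤ)))
          * (aeval (fun i : Fin n => (C tk * X i.succ : MvPolynomial (Fin (n + 1)) kk)))
              (∏ i ∈ T, (X i - C (tk ^ (((Tᶜ.filter (fun j => j < i)).card : ℤ) - ((n : ℤ) - 1))))) := by
  rw [prod_insert (zero_not_mem_map T), insert_compl]
  have h0 : (((Tᶜ.map (emb n)).filter (fun j => j < (0 : Fin (n+1)))).card : ℤ) - (n : ℤ)
      = -(n : ℤ) := by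
    rw [filter_false_of_mem (fun j _ => Fin.not_lt_zero j)]
    simp
  rw [h0, map_prod, mul_assoc]
  congr 1
  rw [prod_map]
  have hfac : ∀ i ∈ T,
      (aeval (fun i : Fin n => (C tk * X i.succ : MvPolynomial (Fin (n + 1)) kk)))
        (X i - C (tk ^ (((Tᶜ.filter (fun j => j < i)).card : ℤ) - ((n : ℤ) - 1))))
      = C tk * (X (Fin.succ i)
          - C (tk ^ (((Tᶜ.filter (fun j => j < i)).card : ℤ) - (n : ℤ)))) := by
    intro i _
    rw [map_sub, aeval_X, aeval_C, MvPolynomial.algebraMap_eq, mul_sub, ← map_mul,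
      show ((Tᶜ.filter (fun j => j < i)).card : ℤ) - ((n : ℤ) - 1)
        = (((Tᶜ.filter (fun j => j < i)).card : ℤ) - (n : ℤ)) + 1 by ring,
      zpow_add_one₀ ht, mul_comm (tk ^ _) tk]
  rw [Finset.prod_congr rfl hfac, Finset.prod_mul_distrib, Finset.prod_const, hT,
    ← map_pow, ← mul_assoc, ← map_mul, ← zpow_natCast tk e, ← zpow_add₀ ht]
  simp only [neg_add_cancel, zpow_zero, map_one, one_mul]
  refine Finset.prod_congr rfl fun i hi => ?_
  have h : ((Finset.map (emb n) Tᶜ).filter (fun j => j < (emb n) i)).card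
      = (Tᶜ.filter (fun j => j < i)).card := filter_map_lt Tᶜ i
  rw [h]; rfl
/-- Variable-splitting recurrence for interpolation elementary polynomials.
The total number of variables is `n + 1`; `e*_d` is the `(n+1)`-variable interpolation
elementary polynomial (with denominator exponent `n`), and the `n`-variable polynomials
`ẽ*_m` (with denominator exponent `n − 1`) are placed in the variables `x₂, …, xₙ₊₁`
via `Fin.succ`. -/
theorem estar_variable_splitting (n : ℕ) (d : ℕ) (hd1 : 1 ≤ d) (hd2 : d ≤ n + 1) :
    estar (n + 1) d (n : ℤ)
      = (X 0 - C (tk ^ (-(n : ℤ)))) * C (tk ^ (-((d : ℤ) - 1)))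
          * (aeval (fun i : Fin n => (C tk * X i.succ : MvPolynomial (Fin (n + 1)) kk)))
              (estar n (d - 1) ((n : ℤ) - 1))
        + rename Fin.succ (estar n d ((n : ℤ) - 1)) := by
  obtain ⟨e, rfl⟩ : ∃ e, d = e + 1 := ⟨d - 1, (Nat.succ_pred_eq_of_pos hd1).symm⟩
  have ht : tk ≠ 0 := RatFunc.X_ne_zero
  have hexp : -(((e + 1 : ℕ) : ℤ) - 1) = -(e : ℤ) := by push_cast; ring
  rw [estar, estar, estar, Nat.add_sub_cancel, hexp]
  rw [Fin.univ_succ, Finset.cons_eq_insert,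
    show (⟨Fin.succ, Fin.succ_injective n⟩ : Fin n ↪ Fin (n+1)) = emb n from rfl,
    Finset.powersetCard_succ_insert (zero_not_mem_map Finset.univ)]
  have hdisj : Disjoint
      (Finset.powersetCard (e + 1) (Finset.univ.map (emb n)))
      ((Finset.powersetCard e (Finset.univ.map (emb n))).image (insert 0)) := by
    rw [Finset.disjoint_right]
    intro S hS hS'
    obtain ⟨T, _, rfl⟩ := Finset.mem_image.mp hS
    exact zero_not_mem_map Finset.univ
      ((Finset.mem_powersetCard.mp hS').1 (Finset.mem_insert_self 0 T))
  have hinj : ∀ T ∈ Finset.powersetCard e (Finset.univ.map (emb n)),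
      ∀ T' ∈ Finset.powersetCard e (Finset.univ.map (emb n)),
      insert 0 T = insert 0 T' → T = T' := by
    intro T hT T' hT' h
    have h0T : (0 : Fin (n+1)) ∉ T :=
      fun hm => zero_not_mem_map Finset.univ ((Finset.mem_powersetCard.mp hT).1 hm)
    have h0T' : (0 : Fin (n+1)) ∉ T' :=
      fun hm => zero_not_mem_map Finset.univ ((Finset.mem_powersetCard.mp hT').1 hm)
    rw [← Finset.erase_insert h0T, ← Finset.erase_insert h0T', h]
  rw [Finset.sum_union hdisj, Finset.sum_image hinj]
  rw [Finset.powersetCard_map, Finset.powersetCard_map, Finset.sum_map, Finset.sum_map]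
  simp only [RelEmbedding.coe_toEmbedding, Finset.mapEmbedding_apply]
  refine (add_comm _ _).trans ?_
  congr 1
  · rw [map_sum, Finset.mul_sum]
    refine Finset.sum_congr rfl fun T hT => ?_
    exact lemB ht T e (Finset.mem_powersetCard.mp hT).2
  · rw [map_sum]
    exact Finset.sum_congr rfl fun T _ => lemA T
end
end
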